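/- Let Φ be a root system with simple roots indexed by 𝕊, fundamental weights ω_i, and let σ be a diagram automorphism with orbits 𝒪 on 𝕊; set ω_𝒪 = ∑_{i∈𝒪} ω_i. Let μ be a dominant coweight and define B(Φ,σ,μ) as the set of σ-invariant dominant vectors ν in the coweight space such that ⟨μ^⋄ − ν, ω_{𝒪_i}⟩ ∈ ℤ_{≥0} for every i ∈ 𝕊 with ⟨ν, α_i⟩ ≠ 0, where μ^⋄ is the average of the σ-orbit of μ. Then μ^⋄ ∈ B(Φ,σ,μ), and B(Φ,σ,μ) is a finite set. -/
import Mathlib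


open Classical in
/-- Combinatorial form of the definition of `B(Φ,σ,μ)`. Vectors of the coweight
space are written in coordinates with respect to the fundamental coweights, so a
vector `x : S → ℚ` pairs with simple roots as `⟨x, α_i⟩ = x i` and with
fundamental weights as `⟨x, ω_j⟩ = ∑ k, x k * D k j`, where
`D i j = ⟨ω_i^∨, ω_j⟩` is the (σ-equivariant, entrywise nonnegative, positive
definite) matrix of pairings. A dominant coweight `μ` is given by its pairings
`m i = ⟨μ, α_i⟩ ∈ ℤ≥0`, and `μ^⋄` (the σ-orbit average of `μ`) by the orbit
averages `d`. Then `B(Φ,σ,μ)` — the set of σ-invariant dominant vectors `x` with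
`⟨μ^⋄ − x, ω_{𝒪_i}⟩ ∈ ℤ≥0` whenever `x i ≠ 0` — contains `μ^⋄` and is finite. -/
theorem stmt14 {S : Type*} [Fintype S] [DecidableEq S]
    (σ : Equiv.Perm S) (D : S → S → ℚ)
    (hDσ : ∀ i j, D (σ i) (σ j) = D i j)
    (hDnonneg : ∀ i j, 0 ≤ D i j)
    (hDposdef : ∀ x : S → ℚ, x ≠ 0 → 0 < ∑ i, ∑ j, x i * D i j * x j)
    (m : S → ℤ) (hm : ∀ i, 0 ≤ m i) :
    let orb : S → Finset S := fun i => Finset.univ.filter fun j => σ.SameCycle i j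
    let d : S → ℚ := fun i => (∑ j ∈ orb i, (m j : ℚ)) / (orb i).card
    let pairOmega : (S → ℚ) → S → ℚ := fun x i => ∑ j ∈ orb i, ∑ k, x k * D k j
    let B : Set (S → ℚ) := {x | (∀ i, x (σ i) = x i) ∧ (∀ i, 0 ≤ x i) ∧
      ∀ i, x i ≠ 0 → ∃ z : ℕ, pairOmega d i - pairOmega x i = (z : ℚ)}
    d ∈ B ∧ B.Finite := by
  intro orb d pairOmega B
  have horb : ∀ i j : S, j ∈ orb i ↔ σ.SameCycle i j := by
    intro i j; simp [orb]
  have hself : ∀ i, i ∈ orb i := fun i => (horb i i).2 (Equiv.Perm.SameCycle.refl _ _)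
  have horbσ : ∀ i, orb (σ i) = orb i := by
    intro i; ext j
    simp only [horb]
    exact Equiv.Perm.sameCycle_apply_left
  have hpairnn : ∀ x : S → ℚ, (∀ i, 0 ≤ x i) → ∀ i, 0 ≤ pairOmega x i := by
    intro x hx i
    apply Finset.sum_nonneg; intro j _
    apply Finset.sum_nonneg; intro k _
    exact mul_nonneg (hx k) (hDnonneg k j)
  have hdB : d ∈ B := by
    refine ⟨?_, ?_, ?_⟩
    · intro i; simp only [d, horbσ]
    · intro i
      apply div_nonneg
      · apply Finset.sum_nonneg; intro j _; exact_mod_cast hm j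
      · exact Nat.cast_nonneg _
    · intro i _; exact ⟨0, by simp⟩
  refine ⟨hdB, ?_⟩
  -- Finiteness
  set N : S → ℕ := fun i => ⌈pairOmega d i⌉₊ with hN
  set f : (S → ℚ) → S → Option ℚ := fun x i =>
    if x i = 0 then none else some (pairOmega d i - pairOmega x i) with hf
  have himg : (f '' B).Finite := by
    apply Set.Finite.subset
      (Set.Finite.pi fun i => ((insert none
        ((Finset.range (N i + 1)).image fun z : ℕ => some (z : ℚ))) :
          Finset (Option ℚ)).finite_toSet)
    rintro g ⟨x, hx, rfl⟩
    intro i _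
    simp only [Finset.coe_insert, Finset.coe_image, Set.mem_insert_iff, hf]
    by_cases hxi : x i = 0
    · left; simp [hxi]
    · right
      obtain ⟨z, hz⟩ := hx.2.2 i hxi
      refine ⟨z, ?_, by simp [hxi, hz]⟩
      simp only [Finset.coe_range, Set.mem_Iio]
      have h1 : (z : ℚ) ≤ pairOmega d i := by
        have := hpairnn x hx.2.1 i
        linarith [hz.symm.le]
      have : z ≤ N i := by
        calc z = ⌈(z : ℚ)⌉₊ := by simp
        _ ≤ N i := Nat.ceil_mono h1
      omega
  apply Set.Finite.of_finite_image himg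
  -- injectivity on B
  intro x hx y hy hfxy
  have hzero : ∀ i, x i = 0 ↔ y i = 0 := by
    intro i
    have := congrFun hfxy i
    simp only [hf] at this
    constructor
    · intro h; by_contra h'; simp [h, h'] at this
    · intro h; by_contra h'; simp [h, h'] at this
  have hpaireq : ∀ i, x i ≠ 0 → pairOmega x i = pairOmega y i := by
    intro i hi
    have hyi : y i ≠ 0 := fun h => hi ((hzero i).2 h)
    have := congrFun hfxy i
    simp only [hf, if_neg hi, if_neg hyi, Option.some_inj] at this
    linarith
  set w : S → ℚ := fun k => x k - y k with hw
  have hwσ : ∀ k, w (σ k) = w k := by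
    intro k; simp only [hw, hx.1 k, hy.1 k]
  set q : S → ℚ := fun j => ∑ k, w k * D k j with hq
  have hqσ : ∀ j, q (σ j) = q j := by
    intro j
    simp only [hq]
    calc ∑ k, w k * D k (σ j) = ∑ k, w (σ k) * D (σ k) (σ j) :=
          (Equiv.sum_comp σ fun k => w k * D k (σ j)).symm
      _ = ∑ k, w k * D k j := by simp only [hwσ, hDσ]
  have hqpow : ∀ n : ℕ, ∀ j, q ((σ ^ n) j) = q j := by
    intro n
    induction n with
    | zero => simp
    | succ n ih =>
      intro j
      rw [pow_succ]
      simp only [Equiv.Perm.mul_apply]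
      rw [ih (σ j)]
      exact hqσ j
  have hqorb : ∀ i, ∀ j ∈ orb i, q j = q i := by
    intro i j hj
    have hsc : σ.SameCycle i j := (horb i j).1 hj
    obtain ⟨n, _, hn⟩ := hsc.exists_pow_eq'
    rw [← hn, hqpow]
  have hqzero : ∀ i, x i ≠ 0 → q i = 0 := by
    intro i hi
    have h1 : pairOmega x i - pairOmega y i = ((orb i).card : ℚ) * q i := by
      simp only [pairOmega, ← Finset.sum_sub_distrib, ← sub_mul]
      have h2 : ∀ j ∈ orb i, (∑ k, (x k - y k) * D k j) = q i := by
        intro j hj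
        rw [← hqorb i j hj]
      rw [Finset.sum_congr rfl h2, Finset.sum_const, nsmul_eq_mul]
    rw [hpaireq i hi, sub_self] at h1
    have hcard : ((orb i).card : ℚ) ≠ 0 := by
      have : 0 < (orb i).card := Finset.card_pos.2 ⟨i, hself i⟩
      exact_mod_cast this.ne'
    rcases mul_eq_zero.mp h1.symm with h | h
    · exact absurd h hcard
    · exact h
  have hwzero : w = 0 := by
    by_contra hne
    have hpos := hDposdef w hne
    have hQ : (∑ i, ∑ j, w i * D i j * w j) = ∑ j, q j * w j := by
      rw [Finset.sum_comm]
      apply Finset.sum_congr rfl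
      intro j _
      rw [hq, Finset.sum_mul]
    have hQ0 : (∑ j, q j * w j) = 0 := by
      apply Finset.sum_eq_zero
      intro j _
      by_cases hxj : x j = 0
      · have hyj : y j = 0 := (hzero j).1 hxj
        simp [hw, hxj, hyj]
      · rw [hqzero j hxj, zero_mul]
    rw [hQ, hQ0] at hpos
    exact lt_irrefl _ hpos
  funext k
  have := congrFun hwzero k
  simp only [hw, Pi.zero_apply] at this
  linarith
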